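/- Fix an integer N ≥ 1 and let S be the set defined in the context. Then S does not contain any infinite arithmetic progression with positive integer gap; that is, there is no x ∈ S and no positive integer Δ such that x + nΔ ∈ S for all natural numbers n. -/

import Mathlib

open MeasureTheory

noncomputable section

/-- The geometric sums `β_k = Σ_{j=0}^{k-1} (N+1)^j`. -/
def beta (N k : ℕ) : ℕ := ∑ j ∈ Finset.range k, (N + 1) ^ j

/-- The deleted intervals `Q_i = [i/N, (i+1)/N)`. -/
def Qset (N i : ℕ) : Set ℝ := Set.Ico ((i : ℝ) / N) (((i : ℝ) + 1) / N)

/-- `R_i = [0,1) \ Q_i`. -/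
def Rset (N i : ℕ) : Set ℝ := Set.Ico (0 : ℝ) 1 \ Qset N i

/-- For `m ≥ 0`, the unique `k` with `β_k ≤ m < β_{k+1}`. -/
def kIdx (N m : ℕ) : ℕ := Nat.findGreatest (fun k => beta N k ≤ m) m

/-- `S_m` for nonnegative `m` : `S_0 = R_0`, and `S_m = m + R_{(k mod N)}` for `m > 0`. -/
def Spos (N m : ℕ) : Set ℝ :=
  if m = 0 then Rset N 0 else (fun x => x + (m : ℝ)) '' Rset N (kIdx N m % N)

/-- `S_m` for all integers `m`: for `m < 0`, `S_m = 2m + S_{|m|}`. -/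
def Sm (N : ℕ) (m : ℤ) : Set ℝ :=
  if 0 ≤ m then Spos N m.toNat else (fun x => x + 2 * (m : ℝ)) '' Spos N m.natAbs

/-- The set `S = ⋃_{m ∈ ℤ} S_m`. -/
def SetS (N : ℕ) : Set ℝ := ⋃ m : ℤ, Sm N m

def idxZ (N : ℕ) (m : ℤ) : ℕ := if m = 0 then 0 else kIdx N m.natAbs % N

lemma beta_succ (N k : ℕ) : beta N (k+1) = beta N k + (N+1)^k := Finset.sum_range_succ _ _

lemma le_beta (N k : ℕ) : k ≤ beta N k := by
  calc k = ∑ _j ∈ Finset.range k, 1 := by simp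
  _ ≤ beta N k := Finset.sum_le_sum fun j _ => Nat.one_le_pow _ _ (by omega)

lemma beta_mono (N : ℕ) : Monotone (beta N) := fun a b h =>
  Finset.sum_le_sum_of_subset (Finset.range_subset_range.2 h)

lemma kIdx_eq {N k m : ℕ} (h1 : beta N k ≤ m) (h2 : m < beta N (k+1)) : kIdx N m = k := by
  have hk : k ≤ m := le_trans (le_beta N k) h1
  have h3 : k ≤ kIdx N m := Nat.le_findGreatest hk h1
  rcases eq_or_lt_of_le h3 with h | h4
  · exact h.symm
  · exfalso
    have h5 : beta N (kIdx N m) ≤ m :=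
      Nat.findGreatest_spec (P := fun k => beta N k ≤ m) hk h1
    have := beta_mono N (show k + 1 ≤ kIdx N m by omega)
    omega

lemma mem_Sm {N : ℕ} {m : ℤ} {y : ℝ} (h : y ∈ Sm N m) :
    y - (m : ℝ) ∈ Rset N (idxZ N m) := by
  rcases le_or_gt 0 m with hm | hm
  · rw [Sm, if_pos hm] at h
    rcases eq_or_lt_of_le hm with h0 | h0
    · rw [idxZ, if_pos (by omega)]
      rw [Spos, if_pos (by omega)] at h
      have : (m : ℝ) = 0 := by exact_mod_cast h0.symm
      simpa [this] using h
    · rw [idxZ, if_neg (by omega)]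
      rw [Spos, if_neg (by omega)] at h
      obtain ⟨r, hr, hry⟩ := h
      have hc : ((m.toNat : ℕ) : ℝ) = (m : ℝ) := by exact_mod_cast Int.toNat_of_nonneg hm
      have hnat : m.natAbs = m.toNat := by omega
      rw [hnat]
      have : y - (m : ℝ) = r := by
        simp only at hry
        linarith [hry, hc]
      rwa [this]
  · rw [Sm, if_neg (by omega)] at h
    obtain ⟨s, hs, hsy⟩ := h
    rw [Spos, if_neg (by omega)] at hs
    obtain ⟨r, hr, hrs⟩ := hs
    rw [idxZ, if_neg (by omega)]
    have hc : ((m.natAbs : ℕ) : ℝ) = -(m : ℝ) := by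
      rw [Nat.cast_natAbs, Int.cast_abs]
      exact abs_of_neg (by exact_mod_cast hm : (m : ℝ) < 0)
    have : y - (m : ℝ) = r := by
      simp only at hsy hrs
      linarith [hsy, hrs, hc]
    rwa [this]


/-- `S` contains no infinite arithmetic progression with positive integer gap. -/
theorem stmt_1 (N : ℕ) (hN : 1 ≤ N) :
    ¬ ∃ x ∈ SetS N, ∃ Δ : ℕ, 0 < Δ ∧ ∀ n : ℕ, x + (n : ℝ) * (Δ : ℝ) ∈ SetS N := by
  rintro ⟨x, hx, Δ, hΔ, hAP⟩
  have key : ∀ n : ℕ, Int.fract x ∈ Rset N (idxZ N (⌊x⌋ + n * Δ)) := by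
    intro n
    have hx' := hAP n
    rw [SetS, Set.mem_iUnion] at hx'
    obtain ⟨m, hm⟩ := hx'
    have h1 := mem_Sm hm
    have h2 : x + (n:ℝ) * (Δ:ℝ) - (m:ℝ) ∈ Set.Ico (0:ℝ) 1 := h1.1
    have hfl : ⌊x + (n:ℝ)*(Δ:ℝ)⌋ = m := by
      rw [Int.floor_eq_iff]
      constructor
      · linarith [h2.1]
      · push_cast
        linarith [h2.2]
    have hfl2 : ⌊x + (n:ℝ)*(Δ:ℝ)⌋ = ⌊x⌋ + (n*Δ : ℕ) := by
      rw [show (n:ℝ)*(Δ:ℝ) = ((n*Δ : ℕ) : ℝ) by push_cast; ring, Int.floor_add_natCast]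
    have hm' : m = ⌊x⌋ + (n:ℤ)*(Δ:ℤ) := by push_cast at hfl2; omega
    have hpt : x + (n:ℝ)*(Δ:ℝ) - (m:ℝ) = Int.fract x := by
      rw [hm', Int.fract]; push_cast; ring
    rw [hpt, hm'] at h1
    exact h1
  have hf : Int.fract x ∈ Set.Ico (0:ℝ) 1 := (key 0).1
  have hN0 : (0:ℝ) < N := by exact_mod_cast hN
  set r : ℕ := (⌊Int.fract x * N⌋).toNat with hrdef
  have h0 : 0 ≤ Int.fract x * N := mul_nonneg hf.1 hN0.le
  have hfl0 : 0 ≤ ⌊Int.fract x * N⌋ := Int.floor_nonneg.2 h0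
  have hrc : (r : ℝ) = (⌊Int.fract x * N⌋ : ℤ) := by exact_mod_cast Int.toNat_of_nonneg hfl0
  have hrlt : r < N := by
    have h1 : Int.fract x * N < N := by nlinarith [hf.2]
    have h2 : ⌊Int.fract x * N⌋ < (N:ℤ) := Int.floor_lt.2 (by exact_mod_cast h1)
    omega
  have hfQ : Int.fract x ∈ Qset N r := by
    constructor
    · rw [div_le_iff₀ hN0, hrc]; exact Int.floor_le _
    · rw [lt_div_iff₀ hN0, hrc]; exact Int.lt_floor_add_one _
  -- construct n hitting index r
  obtain ⟨n, hn⟩ : ∃ n : ℕ, idxZ N (⌊x⌋ + n * Δ) = r := by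
    set m₀ : ℤ := ⌊x⌋ with hm₀
    set k : ℕ := r + N * (Δ + m₀.toNat + 1) with hkdef
    have hk1 : k % N = r := by
      rw [hkdef, Nat.add_mul_mod_self_left, Nat.mod_eq_of_lt hrlt]
    have hNk : Δ + m₀.toNat + 1 ≤ N * (Δ + m₀.toNat + 1) :=
      Nat.le_mul_of_pos_left _ (by omega)
    have hΔle : Δ ≤ k := by omega
    have hΔk : Δ < (N+1)^k := by
      calc Δ ≤ k := hΔle
      _ < 2^k := Nat.lt_two_pow_self
      _ ≤ (N+1)^k := Nat.pow_le_pow_left (by omega) k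
    have hkb : k ≤ beta N k := le_beta N k
    have hm0k : m₀ < (beta N k : ℤ) := by
      have h1 : m₀ ≤ (m₀.toNat : ℤ) := Int.self_le_toNat m₀
      have h2 : m₀.toNat < k := by omega
      omega
    have hk1b : 1 ≤ beta N k := by
      have : 1 ≤ k := by omega
      omega
    set a : ℕ := ((beta N k : ℤ) - m₀).toNat with hadef
    have ha : (a : ℤ) = (beta N k : ℤ) - m₀ := Int.toNat_of_nonneg (by omega)
    set q : ℕ := a / Δ with hqdef
    have e1 : Δ * q + a % Δ = a := Nat.div_add_mod a Δ
    have e2 : a % Δ < Δ := Nat.mod_lt _ hΔ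
    set n : ℕ := q + 1 with hndef
    have e3 : n * Δ = Δ * q + Δ := by rw [hndef]; ring
    have hb1 : a < n * Δ := by omega
    have hb2 : n * Δ ≤ a + Δ := by omega
    refine ⟨n, ?_⟩
    set m : ℤ := m₀ + n * Δ with hmdef
    have hml : (beta N k : ℤ) < m := by
      have : (a : ℤ) < (n : ℤ) * Δ := by exact_mod_cast hb1
      omega
    have hmu : m < (beta N (k+1) : ℤ) := by
      have h1 : (n : ℤ) * Δ ≤ (a : ℤ) + Δ := by exact_mod_cast hb2
      have h3 : (Δ : ℤ) < ((N : ℤ) + 1)^k := by exact_mod_cast hΔk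
      have h2 : (beta N (k+1) : ℤ) = (beta N k : ℤ) + ((N : ℤ)+1)^k := by
        have hb := beta_succ N k
        push_cast [hb]
        ring
      omega
    have hmpos : 0 < m := by omega
    have hnat1 : beta N k ≤ m.natAbs := by omega
    have hnat2 : m.natAbs < beta N (k+1) := by omega
    rw [idxZ, if_neg (by omega), kIdx_eq hnat1 hnat2, hk1]
  exact (key n).2 (hn ▸ hfQ)
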